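/- Let (V, θ) be a rank-one Higgs bundle on a punctured disc U* with flat metric h, and suppose the Chern connection of h is flat. There exists a holomorphic non-degenerate symmetric pairing C of V compatible with h if and only if the monodromy of the Chern connection of h is 1 or −1. -/

import Mathlib

/-- The punctured unit disc `U* = {z : 0 < |z| < 1}`. -/
def pdisc : Set ℂ := {z : ℂ | z ≠ 0 ∧ ‖z‖ < 1}

open Filter Metric Complex Set Topology

lemma pdisc_eq : pdisc = Metric.ball (0:ℂ) 1 \ {0} := by
  ext z
  simp [pdisc, Metric.mem_ball, Complex.dist_eq, and_comm]

lemma key (t : ℝ) (f : ℂ → ℂ) (hf : DifferentiableOn ℂ f pdisc)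
    (habs : ∀ z ∈ pdisc, ‖f z‖ = ‖z‖ ^ t) :
    ∃ n : ℤ, (n : ℝ) = t := by
  by_contra hc
  push_neg at hc
  set n : ℤ := ⌈t⌉ with hn
  have h2 : t < n := lt_of_le_of_ne (Int.le_ceil t) (fun h => hc n h.symm)
  have h1 : (n : ℝ) - 1 < t := by
    have := Int.ceil_lt_add_one t
    linarith
  set e : ℝ := t + 1 - n with he
  have he0 : 0 < e := by simp only [he]; linarith
  have he1 : e ≤ 1 := by simp only [he]; linarith
  set F : ℂ → ℂ := fun z => f z * z ^ (1 - n) with hF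
  have hball : Metric.ball (0:ℂ) 1 ∈ 𝓝 (0:ℂ) := Metric.ball_mem_nhds _ one_pos
  have hFd : DifferentiableOn ℂ F (Metric.ball (0:ℂ) 1 \ {0}) := by
    rw [← pdisc_eq]
    exact hf.mul (fun z hz => ((differentiableAt_zpow.mpr (Or.inl hz.1)).differentiableWithinAt))
  have hFabs : ∀ z ∈ Metric.ball (0:ℂ) 1 \ {0}, ‖F z‖ = ‖z‖ ^ e := by
    intro z hz
    rw [← pdisc_eq] at hz
    have hz0 : (0:ℝ) < ‖z‖ := by
      simpa [norm_pos_iff] using hz.1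
    rw [hF]
    simp only [norm_mul, norm_zpow, habs z hz]
    rw [← Real.rpow_intCast (‖z‖) (1 - n), ← Real.rpow_add hz0]
    push_cast
    ring_nf
    congr 1; rw [he]; ring
  have hFb : ∀ z ∈ Metric.ball (0:ℂ) 1 \ {0}, ‖F z‖ ≤ 1 := by
    intro z hz
    rw [hFabs z hz]
    exact Real.rpow_le_one (norm_nonneg z)
      (le_of_lt (by simpa [Metric.mem_ball, Complex.dist_eq] using hz.1)) (le_of_lt he0)
  -- limit of F at 0 is 0
  have habs_tendsto : Tendsto (fun z : ℂ => ‖z‖ ^ e) (𝓝[≠] (0:ℂ)) (𝓝 0) := by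
    have h1 : ContinuousAt (fun x : ℝ => x ^ e) 0 :=
      Real.continuousAt_rpow_const 0 e (Or.inr (le_of_lt he0))
    have h2 : ContinuousAt (fun z : ℂ => ‖z‖ ^ e) 0 :=
      ContinuousAt.comp (x := (0:ℂ)) (g := fun x : ℝ => x ^ e) (f := fun z : ℂ => ‖z‖)
        (by simpa using h1) continuous_norm.continuousAt
    have := h2.tendsto
    simp only [norm_zero, Real.zero_rpow (ne_of_gt he0)] at this
    exact this.mono_left nhdsWithin_le_nhds
  have hFt : Tendsto F (𝓝[≠] (0:ℂ)) (𝓝 0) := by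
    rw [tendsto_zero_iff_norm_tendsto_zero]
    apply habs_tendsto.congr'
    filter_upwards [self_mem_nhdsWithin,
      eventually_nhdsWithin_of_eventually_nhds hball] with z hz1 hz2
    rw [hFabs z ⟨hz2, hz1⟩]
  have hlim : limUnder (𝓝[≠] (0:ℂ)) F = 0 := hFt.limUnder_eq
  set G : ℂ → ℂ := Function.update F 0 (limUnder (𝓝[≠] (0:ℂ)) F) with hG
  have hGd : DifferentiableOn ℂ G (Metric.ball (0:ℂ) 1) := by
    apply Complex.differentiableOn_update_limUnder_of_bddAbove hball hFd
    refine ⟨1, ?_⟩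
    rintro x ⟨z, hz, rfl⟩
    simpa using hFb z hz
  have hGat : DifferentiableAt ℂ G 0 := hGd.differentiableAt hball
  have hG0 : G 0 = 0 := by simp [hG, hlim]
  have hslope : Tendsto (slope G 0) (𝓝[≠] (0:ℂ)) (𝓝 (deriv G 0)) :=
    hasDerivAt_iff_tendsto_slope.mp hGat.hasDerivAt
  have hslope_abs : Tendsto (fun z => ‖slope G 0 z‖) (𝓝[≠] (0:ℂ))
      (𝓝 (‖deriv G 0‖)) := (continuous_norm.continuousAt.tendsto.comp hslope)
  have hT1 : Tendsto (fun z : ℂ => ‖z‖) (𝓝[≠] (0:ℂ)) (𝓝[>] (0:ℝ)) := by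
    rw [tendsto_nhdsWithin_iff]
    constructor
    · have := (continuous_norm (E := ℂ)).continuousAt (x := (0:ℂ))
      have := this.tendsto.mono_left (nhdsWithin_le_nhds (s := {(0:ℂ)}ᶜ))
      simpa using this
    · filter_upwards [self_mem_nhdsWithin] with z hz
      have : z ≠ 0 := hz
      simpa [Set.mem_Ioi, norm_pos_iff] using this
  have hT2 : Tendsto (fun x : ℝ => x ^ (t - n)) (𝓝[>] (0:ℝ)) atTop := by
    have hbig : Tendsto (fun x : ℝ => (x⁻¹) ^ ((n:ℝ) - t)) (𝓝[>] (0:ℝ)) atTop :=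
      (tendsto_rpow_atTop (by linarith : (0:ℝ) < (n:ℝ) - t)).comp tendsto_inv_nhdsGT_zero
    apply hbig.congr'
    filter_upwards [self_mem_nhdsWithin] with x hx
    rw [Real.inv_rpow (le_of_lt hx), ← Real.rpow_neg (le_of_lt hx), neg_sub]
  have hAtTop : Tendsto (fun z => ‖slope G 0 z‖) (𝓝[≠] (0:ℂ)) atTop := by
    apply (hT2.comp hT1).congr'
    filter_upwards [self_mem_nhdsWithin,
      eventually_nhdsWithin_of_eventually_nhds hball] with z hz1 hz2
    have hzne : z ≠ 0 := hz1
    have hz0 : (0:ℝ) < ‖z‖ := by simpa [norm_pos_iff] using hzne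
    have hs : slope G 0 z = F z / z := by
      rw [slope_def_field, hG0, sub_zero, sub_zero, hG, Function.update_of_ne hzne]
    rw [Function.comp_apply, hs, norm_div, hFabs z ⟨hz2, hz1⟩,
      show t - (n:ℝ) = e - 1 by rw [he]; ring, Real.rpow_sub hz0, Real.rpow_one]
  exact not_tendsto_atTop_of_tendsto_nhds hslope_abs hAtTop

lemma two_a_int_of_monodromy (a : ℝ)
    (h : Complex.exp (2 * Real.pi * a * Complex.I) = 1 ∨
         Complex.exp (2 * Real.pi * a * Complex.I) = -1) :
    ∃ n : ℤ, (n : ℝ) = 2 * a := by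
  have hsq : Complex.exp (2 * (2 * Real.pi * a * Complex.I)) = 1 := by
    rw [two_mul, Complex.exp_add]
    rcases h with h | h <;> rw [h] <;> ring
  rw [Complex.exp_eq_one_iff] at hsq
  obtain ⟨n, hn⟩ := hsq
  refine ⟨n, ?_⟩
  have hπ : (Real.pi : ℂ) ≠ 0 := by exact_mod_cast Real.pi_ne_zero
  have h2 : ((2 * a : ℝ) : ℂ) * (2 * (Real.pi : ℂ) * Complex.I)
      = (n : ℂ) * (2 * (Real.pi : ℂ) * Complex.I) := by
    push_cast at hn ⊢
    linear_combination hn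
  have hne : (2 * (Real.pi : ℂ) * Complex.I) ≠ 0 := by
    simp [hπ, Complex.I_ne_zero]
  have := mul_right_cancel₀ hne h2
  exact_mod_cast this.symm

lemma monodromy_of_two_a_int (a : ℝ) (n : ℤ) (hn : (n : ℝ) = 2 * a) :
    Complex.exp (2 * Real.pi * a * Complex.I) = 1 ∨
    Complex.exp (2 * Real.pi * a * Complex.I) = -1 := by
  have h1 : (2 * Real.pi * a * Complex.I : ℂ) = n * (Real.pi * Complex.I) := by
    have : ((n : ℝ) : ℂ) = ((2 * a : ℝ) : ℂ) := by exact_mod_cast hn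
    push_cast at this ⊢
    rw [this]; ring
  rw [h1, Complex.exp_int_mul, Complex.exp_pi_mul_I]
  rcases Int.even_or_odd n with he | ho
  · left; exact he.neg_one_zpow
  · right; exact ho.neg_one_zpow

/-- Let `(V, θ)` be a rank-one Higgs bundle on the punctured disc (trivialized, so a
Hermitian metric is a positive function `H`), with `h` flat: `log H` is harmonic, i.e.
`H = exp(2a·log|z| + Re g)` for some `a : ℝ` and holomorphic `g`.  The monodromy of the
Chern connection is `exp(2πia)`.  Then there exists a holomorphic non-degenerate symmetric
pairing `C` of `V` compatible with `h` (a nowhere-vanishing holomorphic function `c` with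
`|c| = H`) if and only if the monodromy is `1` or `-1`. -/
theorem stmt10 (a : ℝ) (g : ℂ → ℂ) (H : ℂ → ℝ)
    (hg : DifferentiableOn ℂ g pdisc)
    (hH : ∀ z ∈ pdisc, H z = Real.exp (2 * a * Real.log (‖z‖) + (g z).re)) :
    (∃ c : ℂ → ℂ, DifferentiableOn ℂ c pdisc ∧ (∀ z ∈ pdisc, c z ≠ 0) ∧
        (∀ z ∈ pdisc, ‖c z‖ = H z)) ↔
      (Complex.exp (2 * Real.pi * a * Complex.I) = 1 ∨
       Complex.exp (2 * Real.pi * a * Complex.I) = -1) := by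
  constructor
  · rintro ⟨c, hcd, hcne, hcabs⟩
    set f : ℂ → ℂ := fun z => c z * Complex.exp (-(g z)) with hf
    have hfd : DifferentiableOn ℂ f pdisc := hcd.mul hg.neg.cexp
    have habs : ∀ z ∈ pdisc, ‖f z‖ = ‖z‖ ^ (2 * a) := by
      intro z hz
      have hz0 : (0:ℝ) < ‖z‖ := by simpa [norm_pos_iff] using hz.1
      rw [hf]
      simp only [norm_mul, Complex.norm_exp, hcabs z hz, hH z hz]
      rw [Real.rpow_def_of_pos hz0, ← Real.exp_add]
      congr 1
      simp [Complex.neg_re]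
      ring
    obtain ⟨n, hn⟩ := key (2 * a) f hfd habs
    exact monodromy_of_two_a_int a n hn
  · intro h
    obtain ⟨n, hn⟩ := two_a_int_of_monodromy a h
    refine ⟨fun z => z ^ n * Complex.exp (g z), ?_, ?_, ?_⟩
    · exact DifferentiableOn.mul
        (fun z hz => (differentiableAt_zpow.mpr (Or.inl hz.1)).differentiableWithinAt) hg.cexp
    · intro z hz
      exact mul_ne_zero (zpow_ne_zero _ hz.1) (Complex.exp_ne_zero _)
    · intro z hz
      have hz0 : (0:ℝ) < ‖z‖ := by simpa [norm_pos_iff] using hz.1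
      rw [norm_mul, norm_zpow, Complex.norm_exp, hH z hz, Real.exp_add,
        ← Real.rpow_intCast (‖z‖) n, hn, Real.rpow_def_of_pos hz0]
      congr 2
      ring
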